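/- Let b*_0 ∈ ℂ^{2N+1} (N ≥ 2) be the real 3-mode minimizer of mass m centered at site 0. Then b*_0 is an eigenvector of the real Hessian ∇²H(b*_0) with ∇²H(b*_0) b*_0 = −(42m/11) b*_0, and i b*_0 lies in the kernel of (14m/11) I + ∇²H(b*_0). -/

import Mathlib

/-- The real 3-mode minimizer of mass `m` centered at site `0`. -/
noncomputable def bstar (m : ℝ) : ℤ → ℂ := fun j =>
  if j = -1 ∨ j = 1 then ((Real.sqrt (3 * m / 11) : ℝ) : ℂ)
  else if j = 0 then ((Real.sqrt (5 * m / 11) : ℝ) : ℂ)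
  else 0

/-- The action of the real Hessian `∇²H(b)` (of `H` viewed as a function on
`ℝ^{4N+2} ≅ ℂ^{2N+1}`) on a real direction `ξ`, obtained by differentiating the
gradient `(∇H(b))_j = 2(|b_j|² b_j − 2 conj(b_j) b_{j-1}² − 2 b_{j+1}² conj(b_j))`
in the direction `ξ`. -/
noncomputable def hessH (b ξ : ℤ → ℂ) (j : ℤ) : ℂ :=
  2 * ((b j) ^ 2 * (starRingEnd ℂ) (ξ j)
      + 2 * ((‖b j‖ : ℝ) : ℂ) ^ 2 * ξ j
    - 2 * ((starRingEnd ℂ) (ξ j) * (b (j - 1)) ^ 2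
      + 2 * (starRingEnd ℂ) (b j) * b (j - 1) * ξ (j - 1))
    - 2 * (2 * b (j + 1) * ξ (j + 1) * (starRingEnd ℂ) (b j)
      + (b (j + 1)) ^ 2 * (starRingEnd ℂ) (ξ j)))

lemma bstar_eq_zero (m : ℝ) (j : ℤ) (h1 : j ≠ -1) (h2 : j ≠ 0) (h3 : j ≠ 1) :
    bstar m j = 0 := by simp [bstar, h1, h2, h3]

lemma bstar_zero (m : ℝ) : bstar m 0 = ((Real.sqrt (5 * m / 11) : ℝ) : ℂ) := by
  simp [bstar]

lemma bstar_one (m : ℝ) : bstar m 1 = ((Real.sqrt (3 * m / 11) : ℝ) : ℂ) := by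
  simp [bstar]

lemma bstar_neg_one (m : ℝ) : bstar m (-1) = ((Real.sqrt (3 * m / 11) : ℝ) : ℂ) := by
  simp [bstar]

/-- At the real 3-mode minimizer `b*` of mass `m`: `∇²H(b*) b* = −(42m/11) b*`, and
`i b*` lies in the kernel of `(14m/11) I + ∇²H(b*)`. -/
theorem hessH_eigen_bstar (N : ℕ) (hN : 2 ≤ N) (m : ℝ) (hm : 0 < m) :
    (∀ j : ℤ, hessH (bstar m) (bstar m) j = ((-(42 * m / 11) : ℝ) : ℂ) * bstar m j) ∧
    (∀ j : ℤ, ((14 * m / 11 : ℝ) : ℂ) * (Complex.I * bstar m j)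
        + hessH (bstar m) (fun k => Complex.I * bstar m k) j = 0) := by
  set s : ℂ := ((Real.sqrt (3 * m / 11) : ℝ) : ℂ) with hs_def
  set t : ℂ := ((Real.sqrt (5 * m / 11) : ℝ) : ℂ) with ht_def
  have hs : s ^ 2 = ((3 * m / 11 : ℝ) : ℂ) := by
    rw [hs_def, ← Complex.ofReal_pow, Real.sq_sqrt (by positivity)]
  have ht : t ^ 2 = ((5 * m / 11 : ℝ) : ℂ) := by
    rw [ht_def, ← Complex.ofReal_pow, Real.sq_sqrt (by positivity)]
  push_cast at hs ht
  have hcs : (starRingEnd ℂ) s = s := Complex.conj_ofReal _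
  have hct : (starRingEnd ℂ) t = t := Complex.conj_ofReal _
  have has : ((‖s‖ : ℝ) : ℂ) = s := by
    rw [hs_def, Complex.norm_real, Real.norm_eq_abs, abs_of_nonneg (Real.sqrt_nonneg _)]
  have hat : ((‖t‖ : ℝ) : ℂ) = t := by
    rw [ht_def, Complex.norm_real, Real.norm_eq_abs, abs_of_nonneg (Real.sqrt_nonneg _)]
  have hb2 : bstar m 2 = 0 := bstar_eq_zero m 2 (by decide) (by decide) (by decide)
  have hbm2 : bstar m (-2) = 0 := bstar_eq_zero m (-2) (by decide) (by decide) (by decide)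
  constructor
  · intro j
    by_cases h0 : j = 0
    · subst h0
      simp only [hessH, show (0:ℤ) - 1 = -1 from rfl, show (0:ℤ) + 1 = 1 from rfl,
        bstar_zero, bstar_one, bstar_neg_one, ← hs_def, ← ht_def, hcs, hct, hat]
      push_cast
      linear_combination (6 * t) * ht - 24 * t * hs
    by_cases h1 : j = 1
    · subst h1
      simp only [hessH, show (1:ℤ) - 1 = 0 from rfl, show (1:ℤ) + 1 = 2 from rfl,
        bstar_zero, bstar_one, hb2, ← hs_def, ← ht_def, hcs, hct, has, map_zero]
      push_cast
      linear_combination (6 * s) * hs - 12 * s * ht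
    by_cases hm1 : j = -1
    · subst hm1
      simp only [hessH, show (-1:ℤ) - 1 = -2 from rfl, show (-1:ℤ) + 1 = 0 from rfl,
        bstar_zero, bstar_neg_one, hbm2, ← hs_def, ← ht_def, hcs, hct, has, map_zero]
      push_cast
      linear_combination (6 * s) * hs - 12 * s * ht
    · have hz : bstar m j = 0 := bstar_eq_zero m j hm1 h0 h1
      simp [hessH, hz]
  · intro j
    by_cases h0 : j = 0
    · subst h0
      simp only [hessH, show (0:ℤ) - 1 = -1 from rfl, show (0:ℤ) + 1 = 1 from rfl,
        bstar_zero, bstar_one, bstar_neg_one, ← hs_def, ← ht_def, hat,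
        map_mul, Complex.conj_I, hcs, hct]
      push_cast
      linear_combination (2 * Complex.I * t) * ht - 8 * Complex.I * t * hs
    by_cases h1 : j = 1
    · subst h1
      simp only [hessH, show (1:ℤ) - 1 = 0 from rfl, show (1:ℤ) + 1 = 2 from rfl,
        bstar_zero, bstar_one, hb2, ← hs_def, ← ht_def, has,
        map_mul, Complex.conj_I, hcs, hct, map_zero, mul_zero]
      push_cast
      linear_combination (2 * Complex.I * s) * hs - 4 * Complex.I * s * ht
    by_cases hm1 : j = -1
    · subst hm1
      simp only [hessH, show (-1:ℤ) - 1 = -2 from rfl, show (-1:ℤ) + 1 = 0 from rfl,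
        bstar_zero, bstar_neg_one, hbm2, ← hs_def, ← ht_def, has,
        map_mul, Complex.conj_I, hcs, hct, map_zero, mul_zero]
      push_cast
      linear_combination (2 * Complex.I * s) * hs - 4 * Complex.I * s * ht
    · have hz : bstar m j = 0 := bstar_eq_zero m j hm1 h0 h1
      simp [hessH, hz]
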